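/- In a brace on six or more vertices, every edge is removable. -/

import Mathlib

open SimpleGraph Set

universe u
variable {V : Type u}

/-- Number of odd components of a graph. -/
noncomputable def oddComps (G : SimpleGraph V) : ℕ :=
  Nat.card {c : G.ConnectedComponent // Odd (Nat.card c.supp)}

/-- `S` is a barrier of `G`: the number of odd components of `G − S` equals `|S|`. -/
def IsBarrier (G : SimpleGraph V) (S : Set V) : Prop :=
  oddComps (G.induce Sᶜ) = S.ncard

/-- `G` has a perfect matching. -/
def HasPM (G : SimpleGraph V) : Prop :=
  ∃ M : Subgraph G, M.IsPerfectMatching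

/-- `G` is matching covered. -/
def MatchingCovered (G : SimpleGraph V) : Prop :=
  G.Connected ∧ G.edgeSet.Nonempty ∧
    ∀ e ∈ G.edgeSet, ∃ M : Subgraph G, M.IsPerfectMatching ∧ e ∈ M.edgeSet

/-- An edge `e` of a matching covered graph `G` is removable. -/
def Removable (G : SimpleGraph V) (e : Sym2 V) : Prop :=
  e ∈ G.edgeSet ∧ MatchingCovered (G.deleteEdges {e})

/-- `G` is 3-connected. -/
def ThreeConnected (G : SimpleGraph V) : Prop :=
  4 ≤ Nat.card V ∧ ∀ S : Set V, S.ncard ≤ 2 → (G.induce Sᶜ).Connected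

/-- A brick. -/
def IsBrick (G : SimpleGraph V) : Prop :=
  ThreeConnected G ∧ ∀ x y : V, x ≠ y → HasPM (G.induce ({x, y} : Set V)ᶜ)

/-- neighbours outside `S` of vertices of `S`. -/
def Nbrs (G : SimpleGraph V) (S : Set V) : Set V :=
  {v | v ∉ S ∧ ∃ u ∈ S, G.Adj u v}

/-- factor-critical graph. -/
def FactorCritical (G : SimpleGraph V) : Prop :=
  ∀ v : V, HasPM (G.induce ({v} : Set V)ᶜ)

/-- `(U, W)` is a bipartition of `G`. -/
def IsBipartition (G : SimpleGraph V) (U W : Set V) : Prop :=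
  Disjoint U W ∧ U ∪ W = Set.univ ∧
    ∀ a b : V, G.Adj a b → (a ∈ U ∧ b ∈ W) ∨ (a ∈ W ∧ b ∈ U)

lemma sym2_eq_cases {a b x y : V} (h : s(x, y) = s(a, b)) :
    (x = a ∧ y = b) ∨ (x = b ∧ y = a) := by
  rw [Sym2.eq_iff] at h; tauto

lemma pairPM (H : SimpleGraph V) (U W : Set V)
    (hdisj : Disjoint U W)
    (hext : ∀ u1 ∈ U, ∀ u2 ∈ U, ∀ w1 ∈ W, ∀ w2 ∈ W, u1 ≠ u2 → w1 ≠ w2 →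
      HasPM (H.induce ({u1, u2, w1, w2} : Set V)ᶜ))
    {a c b d : V} (ha : a ∈ U) (hc : c ∈ U) (hb : b ∈ W) (hd : d ∈ W)
    (hab : H.Adj a b) (hcd : H.Adj c d) (hac : a ≠ c) (hbd : b ≠ d) :
    ∃ N : SimpleGraph.Subgraph H, N.IsPerfectMatching ∧ N.Adj a b ∧ N.Adj c d ∧
      ∀ x y, N.Adj x y → s(x, y) = s(a, b) ∨ s(x, y) = s(c, d) ∨
        (x ∉ ({a, c, b, d} : Set V) ∧ y ∉ ({a, c, b, d} : Set V)) := by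
  set T : Set V := ({a, c, b, d} : Set V)ᶜ with hT
  obtain ⟨M0, hM0⟩ := hext a ha c hc b hb d hd hac hbd
  have haW : a ∉ W := disjoint_left.mp hdisj ha
  have hcW : c ∉ W := disjoint_left.mp hdisj hc
  have hbU : b ∉ U := disjoint_right.mp hdisj hb
  have hdU : d ∉ U := disjoint_right.mp hdisj hd
  have had : a ≠ d := fun h => haW (h ▸ hd)
  have hcb : c ≠ b := fun h => hcW (h ▸ hb)
  have haT : a ∉ T := by simp [hT]
  have hcT : c ∉ T := by simp [hT]
  have hbT : b ∉ T := by simp [hT]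
  have hdT : d ∉ T := by simp [hT]
  refine ⟨⟨Set.univ,
      fun x y => s(x, y) = s(a, b) ∨ s(x, y) = s(c, d) ∨
        ∃ (hx : x ∈ T) (hy : y ∈ T), M0.Adj ⟨x, hx⟩ ⟨y, hy⟩,
      ?_, fun _ => trivial, ?_⟩, ⟨?_, fun _ => trivial⟩, Or.inl rfl, Or.inr (Or.inl rfl), ?_⟩
  · rintro x y (h | h | ⟨hx, hy, h⟩)
    · rcases sym2_eq_cases h with ⟨rfl, rfl⟩ | ⟨rfl, rfl⟩
      exacts [hab, hab.symm]
    · rcases sym2_eq_cases h with ⟨rfl, rfl⟩ | ⟨rfl, rfl⟩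
      exacts [hcd, hcd.symm]
    · have := M0.adj_sub h
      simpa using this
  · refine ⟨?_⟩; rintro x y (h | h | ⟨hx, hy, h⟩)
    · exact Or.inl (Sym2.eq_swap.trans h)
    · exact Or.inr (Or.inl (Sym2.eq_swap.trans h))
    · exact Or.inr (Or.inr ⟨hy, hx, h.symm⟩)
  · -- IsMatching
    intro v _
    by_cases hva : v = a
    · subst hva
      refine ⟨b, Or.inl rfl, ?_⟩
      rintro y (h | h | ⟨hx, hy, h⟩)
      · rcases sym2_eq_cases h with ⟨-, rfl⟩ | ⟨h1, rfl⟩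
        · rfl
        · exact absurd h1 hab.ne
      · rcases sym2_eq_cases h with ⟨h1, -⟩ | ⟨h1, -⟩
        exacts [absurd h1 hac, absurd h1 had]
      · exact absurd hx haT
    · by_cases hvc : v = c
      · subst hvc
        refine ⟨d, Or.inr (Or.inl rfl), ?_⟩
        rintro y (h | h | ⟨hx, hy, h⟩)
        · rcases sym2_eq_cases h with ⟨h1, -⟩ | ⟨h1, -⟩
          exacts [absurd h1 (Ne.symm hac), absurd h1 hcb]
        · rcases sym2_eq_cases h with ⟨-, rfl⟩ | ⟨h1, rfl⟩
          · rfl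
          · exact absurd h1 hcd.ne
        · exact absurd hx hcT
      · by_cases hvb : v = b
        · subst hvb
          refine ⟨a, Or.inl Sym2.eq_swap, ?_⟩
          rintro y (h | h | ⟨hx, hy, h⟩)
          · rcases sym2_eq_cases h with ⟨h1, -⟩ | ⟨-, rfl⟩
            exacts [absurd h1 (Ne.symm hab.ne), rfl]
          · rcases sym2_eq_cases h with ⟨h1, -⟩ | ⟨h1, -⟩
            exacts [absurd h1 (Ne.symm hcb), absurd h1 hbd]
          · exact absurd hx hbT
        · by_cases hvd : v = d
          · subst hvd
            refine ⟨c, Or.inr (Or.inl Sym2.eq_swap), ?_⟩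
            rintro y (h | h | ⟨hx, hy, h⟩)
            · rcases sym2_eq_cases h with ⟨h1, -⟩ | ⟨h1, -⟩
              exacts [absurd h1 (Ne.symm had), absurd h1 (Ne.symm hbd)]
            · rcases sym2_eq_cases h with ⟨h1, -⟩ | ⟨-, rfl⟩
              exacts [absurd h1 (Ne.symm hcd.ne), rfl]
            · exact absurd hx hdT
          · have hvT : v ∈ T := by simp [hT, hva, hvc, hvb, hvd]
            obtain ⟨p, hp, hpu⟩ := hM0.1 (hM0.2 ⟨v, hvT⟩)
            refine ⟨↑p, Or.inr (Or.inr ⟨hvT, p.2, hp⟩), ?_⟩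
            rintro y (h | h | ⟨hx, hy, h⟩)
            · rcases sym2_eq_cases h with ⟨h1, -⟩ | ⟨h1, -⟩
              · exact absurd hvT (h1 ▸ haT)
              · exact absurd hvT (h1 ▸ hbT)
            · rcases sym2_eq_cases h with ⟨h1, -⟩ | ⟨h1, -⟩
              · exact absurd hvT (h1 ▸ hcT)
              · exact absurd hvT (h1 ▸ hdT)
            · have := hpu ⟨y, hy⟩ h
              exact congrArg Subtype.val this
  · rintro x y (h | h | ⟨hx, hy, h⟩)
    · exact Or.inl h
    · exact Or.inr (Or.inl h)
    · exact Or.inr (Or.inr ⟨by simpa [hT] using hx, by simpa [hT] using hy⟩)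

lemma toDeleted (H : SimpleGraph V) (e : Sym2 V) (N : SimpleGraph.Subgraph H)
    (hN : N.IsPerfectMatching) (hno : ∀ x y, N.Adj x y → s(x, y) ≠ e) :
    ∃ N' : SimpleGraph.Subgraph (H.deleteEdges {e}), N'.IsPerfectMatching ∧
      ∀ x y, N'.Adj x y ↔ N.Adj x y := by
  refine ⟨⟨Set.univ, N.Adj, fun {x y} h => ?_, fun {_ _} _ => trivial, N.symm⟩,
    ⟨fun v _ => hN.1 (hN.2 v), fun _ => trivial⟩, fun _ _ => Iff.rfl⟩
  rw [SimpleGraph.deleteEdges_adj]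
  exact ⟨N.adj_sub h, by simpa using hno _ _ h⟩

lemma deg3 [Fintype V] (H : SimpleGraph V) (U W : Set V)
    (hdisj : Disjoint U W)
    (hadj : ∀ a b : V, H.Adj a b → (a ∈ U ∧ b ∈ W) ∨ (a ∈ W ∧ b ∈ U))
    (hext : ∀ u1 ∈ U, ∀ u2 ∈ U, ∀ w1 ∈ W, ∀ w2 ∈ W, u1 ≠ u2 → w1 ≠ w2 →
      HasPM (H.induce ({u1, u2, w1, w2} : Set V)ᶜ))
    (hU3 : 3 ≤ U.ncard) (hW3 : 3 ≤ W.ncard)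
    {u : V} (hu : u ∈ U) (w b : V) :
    ∃ w', H.Adj u w' ∧ w' ∈ W ∧ w' ≠ w ∧ w' ≠ b := by
  have huW : u ∉ W := disjoint_left.mp hdisj hu
  have hWmem : ∀ y, H.Adj u y → y ∈ W := by
    intro y hy
    rcases hadj u y hy with ⟨-, h⟩ | ⟨h, -⟩
    · exact h
    · exact absurd h huW
  have claim : ∀ w1 ∈ W, ∀ w2 ∈ W, w1 ≠ w2 →
      ∃ w', H.Adj u w' ∧ w' ∈ W ∧ w' ≠ w1 ∧ w' ≠ w2 := by
    intro w1 hw1 w2 hw2 h12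
    by_contra hno
    push_neg at hno
    -- get two other vertices of U
    have hd1 : ((U \ {u}).ncard + 1 = U.ncard) :=
      Set.ncard_diff_singleton_add_one hu (Set.toFinite _)
    have h2 : 1 < (U \ {u}).ncard := by omega
    rw [Set.one_lt_ncard_iff (Set.toFinite _)] at h2
    obtain ⟨u2, u3, hu2, hu3, hne23⟩ := h2
    obtain ⟨M0, hM0⟩ := hext u2 hu2.1 u3 hu3.1 w1 hw1 w2 hw2 hne23 h12
    have huT : u ∈ ({u2, u3, w1, w2} : Set V)ᶜ := by
      simp only [Set.mem_compl_iff, Set.mem_insert_iff, Set.mem_singleton_iff]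
      push_neg
      refine ⟨fun h => hu2.2 (h ▸ rfl), fun h => hu3.2 (h ▸ rfl),
        fun h => huW (h ▸ hw1), fun h => huW (h ▸ hw2)⟩
    obtain ⟨p, hp, -⟩ := hM0.1 (hM0.2 ⟨u, huT⟩)
    have hAdjup : H.Adj u ↑p := by simpa using M0.adj_sub hp
    have hpT := p.2
    simp only [Set.mem_compl_iff, Set.mem_insert_iff, Set.mem_singleton_iff] at hpT
    push_neg at hpT
    have := hno ↑p hAdjup (hWmem _ hAdjup) hpT.2.2.1
    exact hpT.2.2.2 this
  have hW1 : 1 < W.ncard := by omega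
  by_cases hwW : w ∈ W
  · by_cases hbW : b ∈ W
    · by_cases hwb : w = b
      · obtain ⟨w2, hw2W, hw2⟩ := Set.exists_ne_of_one_lt_ncard hW1 w
        obtain ⟨w', h1, h2, h3, h4⟩ := claim w hwW w2 hw2W (Ne.symm hw2)
        exact ⟨w', h1, h2, h3, hwb ▸ h3⟩
      · exact claim w hwW b hbW hwb
    · obtain ⟨w2, hw2W, hw2⟩ := Set.exists_ne_of_one_lt_ncard hW1 w
      obtain ⟨w', h1, h2, h3, h4⟩ := claim w hwW w2 hw2W (Ne.symm hw2)
      exact ⟨w', h1, h2, h3, fun h => hbW (h ▸ h2)⟩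
  · by_cases hbW : b ∈ W
    · obtain ⟨w2, hw2W, hw2⟩ := Set.exists_ne_of_one_lt_ncard hW1 b
      obtain ⟨w', h1, h2, h3, h4⟩ := claim b hbW w2 hw2W (Ne.symm hw2)
      exact ⟨w', h1, h2, fun h => hwW (h ▸ h2), h3⟩
    · obtain ⟨w1, w2, hw1, hw2, h12⟩ := (Set.one_lt_ncard_iff (Set.toFinite _)).mp hW1
      obtain ⟨w', h1, h2, h3, h4⟩ := claim w1 hw1 w2 hw2 h12
      exact ⟨w', h1, h2, fun h => hwW (h ▸ h2), fun h => hbW (h ▸ h2)⟩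

lemma edgePM [Fintype V] (H : SimpleGraph V) (U W : Set V)
    (hdisj : Disjoint U W)
    (hadj : ∀ a b : V, H.Adj a b → (a ∈ U ∧ b ∈ W) ∨ (a ∈ W ∧ b ∈ U))
    (hext : ∀ u1 ∈ U, ∀ u2 ∈ U, ∀ w1 ∈ W, ∀ w2 ∈ W, u1 ≠ u2 → w1 ≠ w2 →
      HasPM (H.induce ({u1, u2, w1, w2} : Set V)ᶜ))
    (hU3 : 3 ≤ U.ncard) (hW3 : 3 ≤ W.ncard)
    {u w a b : V} (hu : u ∈ U) (hw : w ∈ W) (huw : H.Adj u w)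
    (ha : a ∈ U) (hb : b ∈ W) (hab : H.Adj a b) (hne : s(a, b) ≠ s(u, w)) :
    ∃ M : SimpleGraph.Subgraph (H.deleteEdges {s(u, w)}), M.IsPerfectMatching ∧ M.Adj a b := by
  have huWn : u ∉ W := disjoint_left.mp hdisj hu
  have hwUn : w ∉ U := disjoint_right.mp hdisj hw
  by_cases hsh : a = u ∨ b = w
  · -- f shares a vertex with e
    have hU1 : 1 < U.ncard := by omega
    obtain ⟨c, hcU, hca⟩ := Set.exists_ne_of_one_lt_ncard hU1 a
    obtain ⟨d, hcd, hdW, hdb, -⟩ := deg3 H U W hdisj hadj hext hU3 hW3 hcU b b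
    obtain ⟨N, hN, hNab, hNcd, hprop⟩ :=
      pairPM H U W hdisj hext ha hcU hb hdW hab hcd (Ne.symm hca) (Ne.symm hdb)
    have hcWn : c ∉ W := disjoint_left.mp hdisj hcU
    have hno : ∀ x y, N.Adj x y → s(x, y) ≠ s(u, w) := by
      intro x y hxy heq
      rcases hprop x y hxy with h | h | ⟨hx4, hy4⟩
      · exact hne (h ▸ heq)
      · rw [heq] at h
        rcases sym2_eq_cases h.symm with ⟨hcu, hdw⟩ | ⟨hcw, -⟩
        · rcases hsh with h' | h'
          · exact hca (h'.trans hcu.symm).symm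
          · exact hdb (h'.trans hdw.symm).symm
        · exact hcWn (hcw ▸ hw)
      · have h4 : u ∈ ({a, c, b, d} : Set V) ∨ w ∈ ({a, c, b, d} : Set V) := by
          rcases hsh with h' | h'
          · exact Or.inl (by simp [← h'])
          · exact Or.inr (by simp [← h'])
        rcases sym2_eq_cases heq with ⟨rfl, rfl⟩ | ⟨rfl, rfl⟩
        · rcases h4 with h' | h'
          exacts [hx4 h', hy4 h']
        · rcases h4 with h' | h'
          exacts [hy4 h', hx4 h']
    obtain ⟨N', hN', hiff⟩ := toDeleted H s(u, w) N hN hno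
    exact ⟨N', hN', (hiff a b).mpr hNab⟩
  · push_neg at hsh
    obtain ⟨hau, hbw⟩ := hsh
    obtain ⟨d, hud, hdW, hdw, hdb⟩ := deg3 H U W hdisj hadj hext hU3 hW3 hu w b
    obtain ⟨N, hN, hNab, hNcd, hprop⟩ :=
      pairPM H U W hdisj hext ha hu hb hdW hab hud hau (Ne.symm hdb)
    have hno : ∀ x y, N.Adj x y → s(x, y) ≠ s(u, w) := by
      intro x y hxy heq
      rcases hprop x y hxy with h | h | ⟨hx4, hy4⟩
      · exact hne (h ▸ heq)
      · rw [heq] at h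
        rcases sym2_eq_cases h.symm with ⟨-, hdw'⟩ | ⟨huw', -⟩
        · exact hdw hdw'
        · exact huWn (huw' ▸ hw)
      · have h4 : u ∈ ({a, u, b, d} : Set V) := by simp
        rcases sym2_eq_cases heq with ⟨rfl, -⟩ | ⟨-, rfl⟩
        exacts [hx4 h4, hy4 h4]
    obtain ⟨N', hN', hiff⟩ := toDeleted H s(u, w) N hN hno
    exact ⟨N', hN', (hiff a b).mpr hNab⟩

lemma removable_of [Fintype V] (H : SimpleGraph V) (U W : Set V)
    (hdisj : Disjoint U W)
    (hadj : ∀ a b : V, H.Adj a b → (a ∈ U ∧ b ∈ W) ∨ (a ∈ W ∧ b ∈ U))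
    (hconn : H.Connected)
    (hext : ∀ u1 ∈ U, ∀ u2 ∈ U, ∀ w1 ∈ W, ∀ w2 ∈ W, u1 ≠ u2 → w1 ≠ w2 →
      HasPM (H.induce ({u1, u2, w1, w2} : Set V)ᶜ))
    (hU3 : 3 ≤ U.ncard) (hW3 : 3 ≤ W.ncard)
    {u w : V} (hu : u ∈ U) (hw : w ∈ W) (huw : H.Adj u w) :
    H.Adj u w ∧ ((H.deleteEdges {s(u, w)}).Connected ∧
      (H.deleteEdges {s(u, w)}).edgeSet.Nonempty ∧
      ∀ e ∈ (H.deleteEdges {s(u, w)}).edgeSet,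
        ∃ M : SimpleGraph.Subgraph (H.deleteEdges {s(u, w)}),
          M.IsPerfectMatching ∧ e ∈ M.edgeSet) := by
  set G' := H.deleteEdges {s(u, w)} with hG'
  have huWn : u ∉ W := disjoint_left.mp hdisj hu
  have hwUn : w ∉ U := disjoint_right.mp hdisj hw
  -- another neighbour of u
  obtain ⟨w', huw', hw'W, hw'w, -⟩ := deg3 H U W hdisj hadj hext hU3 hW3 hu w w
  have hfe : s(u, w') ≠ s(u, w) := by
    intro h
    rcases sym2_eq_cases h with ⟨-, h1⟩ | ⟨h1, -⟩
    · exact hw'w h1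
    · exact huWn (h1 ▸ hw)
  have hG'uw' : G'.Adj u w' := by
    rw [hG', SimpleGraph.deleteEdges_adj]
    exact ⟨huw', by simpa using hfe⟩
  -- the "every edge of G' is in a PM of G'" part
  have hcov : ∀ e ∈ G'.edgeSet, ∃ M : SimpleGraph.Subgraph G',
      M.IsPerfectMatching ∧ e ∈ M.edgeSet := by
    intro e he
    revert he
    induction e using Sym2.ind with
    | _ x y =>
      intro he
      rw [SimpleGraph.mem_edgeSet, hG', SimpleGraph.deleteEdges_adj] at he
      obtain ⟨hxy, hmem⟩ := he
      have hne' : s(x, y) ≠ s(u, w) := by simpa using hmem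
      rcases hadj x y hxy with ⟨hxU, hyW⟩ | ⟨hxW, hyU⟩
      · obtain ⟨M, hM, hMadj⟩ :=
          edgePM H U W hdisj hadj hext hU3 hW3 hu hw huw hxU hyW hxy hne'
        exact ⟨M, hM, SimpleGraph.Subgraph.mem_edgeSet.mpr hMadj⟩
      · have hne'' : s(y, x) ≠ s(u, w) := by rwa [Sym2.eq_swap]
        obtain ⟨M, hM, hMadj⟩ :=
          edgePM H U W hdisj hadj hext hU3 hW3 hu hw huw hyU hxW hxy.symm hne''
        refine ⟨M, hM, ?_⟩
        rw [Sym2.eq_swap]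
        exact SimpleGraph.Subgraph.mem_edgeSet.mpr hMadj
  -- a perfect matching of G'
  obtain ⟨M', hM', -⟩ := hcov s(u, w') ((SimpleGraph.mem_edgeSet G').mpr hG'uw')
  -- a perfect matching of H containing u w
  obtain ⟨c, hcU, hcu⟩ := Set.exists_ne_of_one_lt_ncard (by omega : 1 < U.ncard) u
  obtain ⟨d, hcd, hdW, hdw, -⟩ := deg3 H U W hdisj hadj hext hU3 hW3 hcU w w
  obtain ⟨N, hN, hNuw, -, -⟩ :=
    pairPM H U W hdisj hext hu hcU hw hdW huw hcd (Ne.symm hcu) (Ne.symm hdw)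
  -- reachability of u and w in G'
  have hR : G'.Reachable u w := by
    by_contra hreach
    set C : Set V := {x | G'.Reachable u x} with hC
    have huC : u ∈ C := SimpleGraph.Reachable.refl u
    have hwC : w ∉ C := hreach
    -- even via M'
    have hCeven : Even C.ncard := by
      have hK : (⟨C, fun x y => M'.Adj x y ∧ x ∈ C ∧ y ∈ C,
          fun {x y} h => M'.adj_sub h.1, fun {x y} h => h.2.1,
          ⟨fun x y h => ⟨M'.adj_symm h.1, h.2.2, h.2.1⟩⟩⟩ :
            SimpleGraph.Subgraph G').IsMatching := by
        intro v hv
        obtain ⟨p, hp, hpu⟩ := hM'.1 (hM'.2 v)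
        have hpC : p ∈ C := hv.trans (M'.adj_sub hp).reachable
        exact ⟨p, ⟨hp, hv, hpC⟩, fun y hy => hpu y hy.1⟩
      haveI : Fintype ↥C := Fintype.ofFinite _
      have := hK.even_card
      rwa [Set.ncard_eq_toFinset_card'] 
    -- even via N for C \ {u}
    have hCodd : Even (C \ {u}).ncard := by
      have hK2 : (⟨C \ {u}, fun x y => N.Adj x y ∧ x ∈ C \ {u} ∧ y ∈ C \ {u},
          fun {x y} h => N.adj_sub h.1, fun {x y} h => h.2.1,
          ⟨fun x y h => ⟨N.adj_symm h.1, h.2.2, h.2.1⟩⟩⟩ :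
            SimpleGraph.Subgraph H).IsMatching := by
        intro v hv
        obtain ⟨hvC, hvu⟩ := hv
        simp only [Set.mem_singleton_iff] at hvu
        obtain ⟨p, hp, hpu⟩ := hN.1 (hN.2 v)
        have hsne : s(v, p) ≠ s(u, w) := by
          intro h
          rcases sym2_eq_cases h with ⟨h1, -⟩ | ⟨h1, h2⟩
          · exact hvu h1
          · exact hwC (h1 ▸ hvC)
        have hG'vp : G'.Adj v p := by
          rw [hG', SimpleGraph.deleteEdges_adj]
          exact ⟨N.adj_sub hp, by simpa using hsne⟩
        have hpC : p ∈ C := hvC.trans hG'vp.reachable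
        have hpu' : p ≠ u := by
          intro h
          obtain ⟨q, hq, hqu⟩ := hN.1 (hN.2 u)
          have h1 := hqu v (N.adj_symm (h ▸ hp))
          have h2 := hqu w hNuw
          exact hwC ((h1.trans h2.symm) ▸ hvC)
        refine ⟨p, ⟨hp, ⟨hvC, hvu⟩, ⟨hpC, hpu'⟩⟩, fun y hy => hpu y hy.1⟩
      haveI : Fintype ↥(C \ {u}) := Fintype.ofFinite _
      have := hK2.even_card
      rwa [Set.ncard_eq_toFinset_card']
    have hsucc : (C \ {u}).ncard + 1 = C.ncard :=
      Set.ncard_diff_singleton_add_one huC (Set.toFinite _)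
    rw [← hsucc, Nat.even_add_one] at hCeven
    exact hCeven hCodd
  -- connectivity of G'
  have key : ∀ x y : V, H.Adj x y → G'.Reachable x y := by
    intro x y hxy
    by_cases h : s(x, y) = s(u, w)
    · rcases sym2_eq_cases h with ⟨rfl, rfl⟩ | ⟨rfl, rfl⟩
      · exact hR
      · exact hR.symm
    · have : G'.Adj x y := by
        rw [hG', SimpleGraph.deleteEdges_adj]
        exact ⟨hxy, by simpa using h⟩
      exact this.reachable
  have hpre : G'.Preconnected := by
    intro x y
    obtain ⟨p⟩ := hconn.preconnected x y
    induction p with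
    | nil => exact SimpleGraph.Reachable.refl _
    | cons h p ih => exact (key _ _ h).trans ih
  haveI : Nonempty V := hconn.nonempty
  exact ⟨huw, ⟨hpre⟩, ⟨s(u, w'), (SimpleGraph.mem_edgeSet G').mpr hG'uw'⟩, hcov⟩

/-- in a brace on six or more vertices every edge is removable. -/
theorem stmt19 [Fintype V] (H : SimpleGraph V) (U W : Set V)
    (hbip : IsBipartition H U W) (hcard : U.ncard = W.ncard)
    (h2 : 2 ≤ U.ncard) (hconn : H.Connected)
    (hext : ∀ u1 ∈ U, ∀ u2 ∈ U, ∀ w1 ∈ W, ∀ w2 ∈ W, u1 ≠ u2 → w1 ≠ w2 →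
      HasPM (H.induce ({u1, u2, w1, w2} : Set V)ᶜ))
    (hV : 6 ≤ Nat.card V) :
    ∀ e ∈ H.edgeSet, Removable H e := by
  have hadj := hbip.2.2
  have hsum : U.ncard + W.ncard = Nat.card V := by
    rw [← Set.ncard_union_eq hbip.1 (Set.toFinite _) (Set.toFinite _), hbip.2.1,
      Set.ncard_univ]
  have hU3 : 3 ≤ U.ncard := by omega
  have hW3 : 3 ≤ W.ncard := by omega
  intro e he
  revert he
  induction e using Sym2.ind with
  | _ x y =>
    intro he
    have hxy : H.Adj x y := (SimpleGraph.mem_edgeSet H).mp he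
    rcases hadj x y hxy with ⟨hxU, hyW⟩ | ⟨hxW, hyU⟩
    · exact ⟨he,
        (removable_of H U W hbip.1 hadj hconn hext hU3 hW3 hxU hyW hxy).2⟩
    · rw [Sym2.eq_swap] at he ⊢
      exact ⟨he,
        (removable_of H U W hbip.1 hadj hconn hext hU3 hW3 hyU hxW hxy.symm).2⟩
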